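/- For any sequence (ψ_k) in a Hilbert space H, dom(S) = dom(C) if and only if ran(C) ⊆ dom(D), where D is the synthesis operator. -/

import Mathlib

open Filter Topology
open scoped ComplexInnerProductSpace

lemma aux_dom {H : Type*} [NormedAddCommGroup H] [InnerProductSpace ℂ H]
    (ψ : ℕ → H) (f s : H)
    (hs : Tendsto (fun n => ∑ k ∈ Finset.range n, ⟪ψ k, f⟫ • ψ k) atTop (𝓝 s)) :
    Memℓp (fun k => ⟪ψ k, f⟫) 2 := by
  have h1 : Tendsto (fun n => ⟪f, ∑ k ∈ Finset.range n, ⟪ψ k, f⟫ • ψ k⟫) atTop (𝓝 ⟪f, s⟫) :=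
    (Filter.Tendsto.inner tendsto_const_nhds hs)
  have heq : ∀ n, ⟪f, ∑ k ∈ Finset.range n, ⟪ψ k, f⟫ • ψ k⟫
      = (↑(∑ k ∈ Finset.range n, ‖⟪ψ k, f⟫‖ ^ 2) : ℂ) := by
    intro n
    rw [inner_sum]
    push_cast
    refine Finset.sum_congr rfl fun k _ => ?_
    rw [inner_smul_right, ← inner_conj_symm f (ψ k), RCLike.mul_conj, norm_inner_symm]
    norm_cast
  have h2 : Tendsto (fun n => (∑ k ∈ Finset.range n, ‖⟪ψ k, f⟫‖ ^ 2 : ℝ)) atTop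
      (𝓝 (⟪f, s⟫.re)) := by
    exact ((Complex.continuous_re.tendsto _).comp h1).congr fun n => by
      simp [Function.comp, heq, ← Complex.ofReal_pow]
  have hsum : Summable (fun k => ‖⟪ψ k, f⟫‖ ^ 2) := by
    apply summable_of_sum_range_le (c := ⟪f, s⟫.re) (fun n => sq_nonneg _)
    intro n
    have hmono : Monotone (fun n => (∑ k ∈ Finset.range n, ‖⟪ψ k, f⟫‖ ^ 2 : ℝ)) := by
      intro a b hab
      exact Finset.sum_le_sum_of_subset_of_nonneg (Finset.range_subset_range.2 hab)
        (fun i _ _ => sq_nonneg _)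
    exact hmono.ge_of_tendsto h2 n
  apply memℓp_gen
  have : (2 : ENNReal).toReal = (2 : ℕ) := by norm_num
  rw [this]
  simpa [Real.rpow_natCast] using hsum

/-- For any sequence `(ψ k)` in a Hilbert space `H`, `dom S = dom C` if and only if
`ran C ⊆ dom D`. -/
theorem stmt2 {H : Type*} [NormedAddCommGroup H] [InnerProductSpace ℂ H] [CompleteSpace H]
    (ψ : ℕ → H) :
    ({f : H | ∃ s : H,
        Tendsto (fun n => ∑ k ∈ Finset.range n, ⟪ψ k, f⟫ • ψ k) atTop (𝓝 s)}
      = {f : H | Memℓp (fun k => ⟪ψ k, f⟫) 2})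
    ↔ (∀ f : H, Memℓp (fun k => ⟪ψ k, f⟫) 2 →
        ∃ s : H, Tendsto (fun n => ∑ k ∈ Finset.range n, ⟪ψ k, f⟫ • ψ k) atTop (𝓝 s)) := by
  constructor
  · intro h f hf
    have : f ∈ {f : H | Memℓp (fun k => ⟪ψ k, f⟫) 2} := hf
    rw [← h] at this
    exact this
  · intro h
    ext f
    constructor
    · rintro ⟨s, hs⟩
      exact aux_dom ψ f s hs
    · intro hf
      exact h f hf
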